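/- Suppose there exist a symmetric positive definite matrix P ∈ ℝ^{n_x×n_x}, a matrix K₀ ∈ ℝ^{n_u×n_x}, and scalars α ∈ (0,1), ν > 0 such that Ψ + Γᵀ M(L) Γ ⪯ 0. Then the equilibrium x = 0 of the closed-loop system x_{t+1} = (A + B K₀) x_t + G φ(C_q x_t) is globally exponentially stable with decay rate α; explicitly, every trajectory satisfies ‖x_t‖ ≤ √(λ_max(P)/λ_min(P)) · αᵗ · ‖x₀‖ for all t ∈ ℕ and all x₀ ∈ ℝ^{n_x}. (Theorem 2.) -/

import Mathlib

open Matrix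

/-- The Euclidean norm of a vector in `ℝ^k`. -/
noncomputable def eNorm {k : ℕ} (x : Fin k → ℝ) : ℝ := Real.sqrt (x ⬝ᵥ x)

lemma dotProduct_self_nonneg' {k : ℕ} (x : Fin k → ℝ) : 0 ≤ x ⬝ᵥ x :=
  Finset.sum_nonneg fun i _ => mul_self_nonneg _

lemma eNorm_nonneg {k : ℕ} (x : Fin k → ℝ) : 0 ≤ eNorm x := Real.sqrt_nonneg _

lemma dot_tmul {l m n : Type*} [Fintype l] [Fintype m] [Fintype n]
    (X : Matrix m l ℝ) (P : Matrix m m ℝ) (Y : Matrix m n ℝ) (u : l → ℝ) (v : n → ℝ) :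
    u ⬝ᵥ (Xᵀ * P * Y) *ᵥ v = (X *ᵥ u) ⬝ᵥ P *ᵥ (Y *ᵥ v) := by
  rw [← mulVec_mulVec, ← mulVec_mulVec, dotProduct_mulVec, vecMul_transpose]

lemma quad_le {n : ℕ} {P : Matrix (Fin n) (Fin n) ℝ} (hP : P.IsHermitian) (x : Fin n → ℝ) :
    (⨅ i, hP.eigenvalues i) * (x ⬝ᵥ x) ≤ x ⬝ᵥ P *ᵥ x ∧
      x ⬝ᵥ P *ᵥ x ≤ (⨆ i, hP.eigenvalues i) * (x ⬝ᵥ x) := by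
  rcases Nat.eq_zero_or_pos n with h | h
  · subst h; simp [dotProduct]
  have : Nonempty (Fin n) := Fin.pos_iff_nonempty.mp h
  set U : Matrix (Fin n) (Fin n) ℝ := (hP.eigenvectorUnitary : Matrix (Fin n) (Fin n) ℝ) with hU
  have hUt : Uᵀ = star U := by
    rw [star_eq_conjTranspose, conjTranspose_eq_transpose_of_trivial]
  set y : Fin n → ℝ := Uᵀ *ᵥ x with hy
  have hyy : y ⬝ᵥ y = x ⬝ᵥ x := by
    rw [hy, dotProduct_mulVec, ← mulVec_transpose, transpose_transpose, hUt, mulVec_mulVec,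
      (mem_unitaryGroup_iff.mp hP.eigenvectorUnitary.2 : U * star U = 1), one_mulVec]
  have hquad : x ⬝ᵥ P *ᵥ x = ∑ i, hP.eigenvalues i * (y i)^2 := by
    conv_lhs => rw [hP.spectral_theorem, Unitary.conjStarAlgAut_apply]
    rw [← mulVec_mulVec, ← mulVec_mulVec, dotProduct_mulVec, ← mulVec_transpose, ← hUt]
    simp [hy, dotProduct, mulVec_diagonal]
    exact Finset.sum_congr rfl fun i _ => by ring
  have hy2 : y ⬝ᵥ y = ∑ i, (y i)^2 := by simp [dotProduct, sq]
  rw [hquad, ← hyy, hy2, Finset.mul_sum, Finset.mul_sum]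
  constructor
  · refine Finset.sum_le_sum fun i _ => ?_
    exact mul_le_mul_of_nonneg_right
      (ciInf_le (Set.Finite.bddBelow (Set.finite_range _)) i) (sq_nonneg _)
  · refine Finset.sum_le_sum fun i _ => ?_
    exact mul_le_mul_of_nonneg_right
      (le_ciSup (Set.Finite.bddAbove (Set.finite_range _)) i) (sq_nonneg _)

lemma step_ineq {nx nφ nq : ℕ}
    (S : Matrix (Fin nx) (Fin nx) ℝ) (G : Matrix (Fin nx) (Fin nφ) ℝ)
    (Cq : Matrix (Fin nq) (Fin nx) ℝ) (P : Matrix (Fin nx) (Fin nx) ℝ)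
    (α ν L : ℝ) (hν : 0 < ν)
    (hLMI :
      (-(Matrix.fromBlocks (Sᵀ * P * S - α ^ 2 • P) (Sᵀ * P * G) (Gᵀ * P * S) (Gᵀ * P * G) +
        (Matrix.fromBlocks Cq 0 0 (1 : Matrix (Fin nφ) (Fin nφ) ℝ))ᵀ *
          Matrix.fromBlocks ((ν⁻¹ * L ^ 2) • (1 : Matrix (Fin nq) (Fin nq) ℝ)) 0 0
            ((-ν⁻¹) • (1 : Matrix (Fin nφ) (Fin nφ) ℝ)) *
          Matrix.fromBlocks Cq 0 0 (1 : Matrix (Fin nφ) (Fin nφ) ℝ))).PosSemidef)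
    (x : Fin nx → ℝ) (w : Fin nφ → ℝ)
    (hw : w ⬝ᵥ w ≤ L ^ 2 * ((Cq *ᵥ x) ⬝ᵥ (Cq *ᵥ x))) :
    (S *ᵥ x + G *ᵥ w) ⬝ᵥ P *ᵥ (S *ᵥ x + G *ᵥ w) ≤ α ^ 2 * (x ⬝ᵥ P *ᵥ x) := by
  have h0 := hLMI.dotProduct_mulVec_nonneg (Sum.elim x w)
  rw [star_trivial] at h0
  simp only [RCLike.re_to_real, neg_mulVec, dotProduct_neg, neg_nonneg] at h0
  rw [add_mulVec, dotProduct_add] at h0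
  have hΨ : Sum.elim x w ⬝ᵥ
      (Matrix.fromBlocks (Sᵀ * P * S - α ^ 2 • P) (Sᵀ * P * G) (Gᵀ * P * S) (Gᵀ * P * G)) *ᵥ
        Sum.elim x w
      = (S *ᵥ x + G *ᵥ w) ⬝ᵥ P *ᵥ (S *ᵥ x + G *ᵥ w) - α ^ 2 * (x ⬝ᵥ P *ᵥ x) := by
    rw [fromBlocks_mulVec, sumElim_dotProduct_sumElim]
    rw [sub_mulVec, smul_mulVec]
    simp only [dotProduct_add, add_dotProduct, dotProduct_sub, dotProduct_smul, mulVec_add,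
      smul_eq_mul, dot_tmul, Sum.elim_comp_inl, Sum.elim_comp_inr]
    ring
  have hN : Sum.elim x w ⬝ᵥ
      ((Matrix.fromBlocks Cq 0 0 (1 : Matrix (Fin nφ) (Fin nφ) ℝ))ᵀ *
          Matrix.fromBlocks ((ν⁻¹ * L ^ 2) • (1 : Matrix (Fin nq) (Fin nq) ℝ)) 0 0
            ((-ν⁻¹) • (1 : Matrix (Fin nφ) (Fin nφ) ℝ)) *
          Matrix.fromBlocks Cq 0 0 (1 : Matrix (Fin nφ) (Fin nφ) ℝ)) *ᵥ Sum.elim x w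
      = ν⁻¹ * L ^ 2 * ((Cq *ᵥ x) ⬝ᵥ (Cq *ᵥ x)) - ν⁻¹ * (w ⬝ᵥ w) := by
    rw [dot_tmul, fromBlocks_mulVec, fromBlocks_mulVec]
    simp only [zero_mulVec, add_zero, zero_add, one_mulVec, smul_mulVec,
      sumElim_dotProduct_sumElim, dotProduct_smul, smul_eq_mul, neg_mul,
      Sum.elim_comp_inl, Sum.elim_comp_inr]
    ring
  rw [hΨ, hN] at h0
  have hslack : 0 ≤ ν⁻¹ * L ^ 2 * ((Cq *ᵥ x) ⬝ᵥ (Cq *ᵥ x)) - ν⁻¹ * (w ⬝ᵥ w) := by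
    have := mul_le_mul_of_nonneg_left hw (le_of_lt (inv_pos.mpr hν))
    nlinarith
  linarith


/-- **Theorem 2.** If there exist `P ≻ 0`, `K₀`, `α ∈ (0,1)` and `ν > 0` with
`Ψ + Γᵀ M(L) Γ ⪯ 0`, then the origin of the closed-loop system
`x_{t+1} = (A + BK₀)x_t + Gφ(C_q x_t)` is globally exponentially stable with
decay rate `α`: every trajectory satisfies
`‖x_t‖ ≤ √(λ_max(P)/λ_min(P)) · αᵗ · ‖x₀‖`. -/
theorem globally_exponentially_stable_of_LMI
    {nx nu nφ nq : ℕ}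
    (A : Matrix (Fin nx) (Fin nx) ℝ) (B : Matrix (Fin nx) (Fin nu) ℝ)
    (G : Matrix (Fin nx) (Fin nφ) ℝ) (Cq : Matrix (Fin nq) (Fin nx) ℝ)
    (K₀ : Matrix (Fin nu) (Fin nx) ℝ)
    (φ : (Fin nq → ℝ) → (Fin nφ → ℝ)) (hφ0 : φ 0 = 0)
    (L : ℝ) (hL : 0 < L)
    (hφLip : ∀ q₁ q₂, eNorm (φ q₁ - φ q₂) ≤ L * eNorm (q₁ - q₂))
    (P : Matrix (Fin nx) (Fin nx) ℝ) (hP : P.PosDef)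
    (α : ℝ) (hα : α ∈ Set.Ioo (0 : ℝ) 1) (ν : ℝ) (hν : 0 < ν)
    (hLMI :
      (-(Matrix.fromBlocks
          ((A + B * K₀)ᵀ * P * (A + B * K₀) - α ^ 2 • P)
          ((A + B * K₀)ᵀ * P * G)
          (Gᵀ * P * (A + B * K₀))
          (Gᵀ * P * G) +
        (Matrix.fromBlocks Cq 0 0 (1 : Matrix (Fin nφ) (Fin nφ) ℝ))ᵀ *
          Matrix.fromBlocks ((ν⁻¹ * L ^ 2) • (1 : Matrix (Fin nq) (Fin nq) ℝ)) 0 0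
            ((-ν⁻¹) • (1 : Matrix (Fin nφ) (Fin nφ) ℝ)) *
          Matrix.fromBlocks Cq 0 0 (1 : Matrix (Fin nφ) (Fin nφ) ℝ))).PosSemidef) :
    ∀ x : ℕ → (Fin nx → ℝ),
      (∀ t, x (t + 1) = (A + B * K₀).mulVec (x t) + G.mulVec (φ (Cq.mulVec (x t)))) →
      ∀ t : ℕ, eNorm (x t) ≤
        Real.sqrt ((⨆ i, hP.1.eigenvalues i) / (⨅ i, hP.1.eigenvalues i)) *
          α ^ t * eNorm (x 0) := by
  intro x hx t
  obtain ⟨hα0, hα1⟩ := hα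
  rcases Nat.eq_zero_or_pos nx with h | h
  · have hz : eNorm (x t) = 0 := by subst h; simp [eNorm, dotProduct]
    rw [hz]
    exact mul_nonneg (mul_nonneg (Real.sqrt_nonneg _) (pow_nonneg hα0.le _)) (eNorm_nonneg _)
  have : Nonempty (Fin nx) := Fin.pos_iff_nonempty.mp h
  set lm := ⨅ i, hP.1.eigenvalues i with hlm
  set lM := ⨆ i, hP.1.eigenvalues i with hlM
  have hlm_pos : 0 < lm := by
    have h1 : ∀ i, (0:ℝ) < hP.1.eigenvalues i := hP.eigenvalues_pos
    obtain ⟨i0, hi0⟩ := Finite.exists_min hP.1.eigenvalues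
    exact lt_of_lt_of_le (h1 i0) (le_ciInf hi0)
  -- Lipschitz bound on w
  have hwb : ∀ v : Fin nx → ℝ,
      (φ (Cq *ᵥ v)) ⬝ᵥ (φ (Cq *ᵥ v)) ≤ L ^ 2 * ((Cq *ᵥ v) ⬝ᵥ (Cq *ᵥ v)) := by
    intro v
    have hlip := hφLip (Cq *ᵥ v) 0
    rw [hφ0, sub_zero, sub_zero] at hlip
    unfold eNorm at hlip
    have h1 := dotProduct_self_nonneg' (φ (Cq *ᵥ v))
    have h2 := dotProduct_self_nonneg' (Cq *ᵥ v)
    have h3 := Real.sq_sqrt h1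
    have h4 := Real.sq_sqrt h2
    have h5 := Real.sqrt_nonneg ((φ (Cq *ᵥ v)) ⬝ᵥ (φ (Cq *ᵥ v)))
    have h6 := Real.sqrt_nonneg ((Cq *ᵥ v) ⬝ᵥ (Cq *ᵥ v))
    nlinarith
  -- Lyapunov decrease
  have hV : ∀ s : ℕ, (x s) ⬝ᵥ P *ᵥ (x s) ≤ (α ^ 2) ^ s * ((x 0) ⬝ᵥ P *ᵥ (x 0)) := by
    intro s
    induction s with
    | zero => simp
    | succ s ih =>
      have hstep := step_ineq (A + B * K₀) G Cq P α ν L hν hLMI (x s) (φ (Cq *ᵥ x s)) (hwb (x s))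
      rw [hx s]
      calc ((A + B * K₀) *ᵥ x s + G *ᵥ φ (Cq *ᵥ x s)) ⬝ᵥ
            P *ᵥ ((A + B * K₀) *ᵥ x s + G *ᵥ φ (Cq *ᵥ x s))
          ≤ α ^ 2 * ((x s) ⬝ᵥ P *ᵥ (x s)) := hstep
        _ ≤ α ^ 2 * ((α ^ 2) ^ s * ((x 0) ⬝ᵥ P *ᵥ (x 0))) :=
            mul_le_mul_of_nonneg_left ih (sq_nonneg α)
        _ = (α ^ 2) ^ (s + 1) * ((x 0) ⬝ᵥ P *ᵥ (x 0)) := by ring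
  have h1 := (quad_le hP.1 (x t)).1
  have h3 := (quad_le hP.1 (x 0)).2
  have hpowt : ((α:ℝ) ^ 2) ^ t = (α ^ t) ^ 2 := by
    rw [← pow_mul, ← pow_mul, Nat.mul_comm]
  have hmain : x t ⬝ᵥ x t ≤ lM / lm * ((α ^ t) ^ 2 * (x 0 ⬝ᵥ x 0)) := by
    rw [div_mul_eq_mul_div, le_div_iff₀ hlm_pos]
    have h2 := hV t
    rw [hpowt] at h2
    nlinarith [sq_nonneg (α ^ t)]
  have hfinal : eNorm (x t) ≤ Real.sqrt (lM / lm * ((α ^ t) ^ 2 * (x 0 ⬝ᵥ x 0))) := by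
    unfold eNorm
    exact Real.sqrt_le_sqrt hmain
  calc eNorm (x t) ≤ Real.sqrt (lM / lm * ((α ^ t) ^ 2 * (x 0 ⬝ᵥ x 0))) := hfinal
    _ = Real.sqrt (lM / lm) * α ^ t * eNorm (x 0) := by
        rw [Real.sqrt_mul (div_nonneg (le_trans hlm_pos.le (le_trans
          (ciInf_le (Set.Finite.bddBelow (Set.finite_range _)) (Classical.arbitrary _))
          (le_ciSup (Set.Finite.bddAbove (Set.finite_range _)) (Classical.arbitrary _))))
          hlm_pos.le), Real.sqrt_mul (sq_nonneg _), Real.sqrt_sq (pow_nonneg hα0.le _)]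
        unfold eNorm
        ring
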